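/- Let g = γ+δ and h = γ-δ. The set of eigenvalues of the 6×6 matrix H(g,h;z) consists of 2 (with multiplicity two), 5/2 ± (1/2)√(21 - 16γ² - 4z²), and 5/2 ± (1/2)√(5 - 16δ² - 4z²). -/

import Mathlib

open Matrix

set_option maxHeartbeats 4000000 in
set_option maxRecDepth 100000 in
private lemma det6_aux (a b c d p q r s : ℂ) :
    (!![p, r, 0, 0, 0, 0;
        s, q, a, b, 0, 0;
        0, c, p, 0, d, 0;
        0, d, 0, p, c, 0;
        0, 0, b, a, q, s;
        0, 0, 0, 0, r, p]).det
      = (p*(q*p-(a+b)*(c+d))-r*s*p) * (p*(q*p-(a-b)*(c-d))-r*s*p) := by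
  simp [Matrix.det_succ_row_zero, Fin.sum_univ_succ, Fin.succAbove]
  ring

set_option maxHeartbeats 4000000 in
theorem stmt4 (γ δ z : ℝ) :
    let g : ℝ := γ + δ
    let h : ℝ := γ - δ
    let H : Matrix (Fin 6) (Fin 6) ℂ :=
      (!![2, -1-z, 0, 0, 0, 0;
          -1+z, 3, -1-g, -1-h, 0, 0;
          0, -1+g, 2, 0, -1+h, 0;
          0, -1+h, 0, 2, -1+g, 0;
          0, 0, -1-h, -1-g, 3, -1+z;
          0, 0, 0, 0, -1-z, 2] : Matrix (Fin 6) (Fin 6) ℝ).map Complex.ofReal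
    ∀ lam : ℂ, (lam • (1 : Matrix (Fin 6) (Fin 6) ℂ) - H).det =
      (lam - 2)^2 * ((lam - 5/2)^2 - ((21 - 16*(γ:ℂ)^2 - 4*(z:ℂ)^2)/4))
        * ((lam - 5/2)^2 - ((5 - 16*(δ:ℂ)^2 - 4*(z:ℂ)^2)/4)) := by
  intro g h H lam
  have hM : lam • (1 : Matrix (Fin 6) (Fin 6) ℂ) - H =
      !![lam-2, 1+z, 0, 0, 0, 0;
         1-z, lam-3, 1+(γ:ℂ)+δ, 1+(γ:ℂ)-δ, 0, 0;
         0, 1-(γ:ℂ)-δ, lam-2, 0, 1-(γ:ℂ)+δ, 0;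
         0, 1-(γ:ℂ)+δ, 0, lam-2, 1-(γ:ℂ)-δ, 0;
         0, 0, 1+(γ:ℂ)-δ, 1+(γ:ℂ)+δ, lam-3, 1-z;
         0, 0, 0, 0, 1+z, lam-2] := by
    ext i j
    fin_cases i <;> fin_cases j <;>
      norm_num [H, g, h, Matrix.one_apply] <;>
        first | (push_cast; ring1) | (intro hh; exact absurd hh (by decide))
  rw [hM, det6_aux]
  ring
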